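/- In a syndrome-extraction circuit for an LDPC code with qubit degree and generator degree both at most Δ and depth D, where per-time-step errors on data and ancilla qubits are independent locally decaying with rate √p_phys, and errors propagate through CNOT layers via the sparse parity-check matrix H_X (row and column weight at most Δ), the final joint error distribution on data and ancilla qubits is locally decaying with rate at most 2^{Δ+1} · D · p_phys^{1/(2(Δ+1))}. -/

import Mathlib

open Finset

/-- The support of a binary vector: the set of its nonzero coordinates. -/
def fsupp {Q : Type*} [Fintype Q] [DecidableEq Q] (v : Q → ZMod 2) : Finset Q :=
  univ.filter (fun x => v x ≠ 0)

private lemma sum_biUnion_le_sum {ι α : Type*} [DecidableEq α] (s : Finset ι)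
    (t : ι → Finset α) (f : α → ℝ) (hf : ∀ a, 0 ≤ f a) :
    ∑ a ∈ s.biUnion t, f a ≤ ∑ i ∈ s, ∑ a ∈ t i, f a := by
  classical
  induction s using Finset.induction_on with
  | empty => simp
  | @insert i s' h ih =>
    rw [Finset.biUnion_insert, Finset.sum_insert h]
    have h1 : ∑ a ∈ t i ∪ s'.biUnion t, f a
        ≤ ∑ a ∈ t i, f a + ∑ a ∈ s'.biUnion t, f a := by
      rw [← Finset.union_sdiff_self_eq_union,
        Finset.sum_union (Finset.disjoint_sdiff)]
      exact add_le_add le_rfl (Finset.sum_le_sum_of_subset_of_nonneg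
        Finset.sdiff_subset (fun a _ _ => hf a))
    exact le_trans h1 (by gcongr)

/-- In a syndrome-extraction circuit for an LDPC code with qubit and
generator degrees at most `Δ` and depth `D`, per-time-step errors `(b^{(t)}, c^{(t)})` on
data and ancilla qubits are independent and locally decaying with rate `√p`, and errors
propagate through the CNOT layers via the sparse parity-check matrix `H` (row and column
weight at most `Δ`): the final error support is contained in the union over `t` of the
supports of `(I 0; H I)·(b^{(t)}; c^{(t)})`. Then the induced final joint error
distribution on data and ancilla qubits is locally decaying with rate
`2^{Δ+1} · D · p^{1/(2(Δ+1))}`. -/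
theorem stmt_16 (n m Δ D : ℕ) (hΔ : 0 < Δ) (hD : 0 < D)
    (p : ℝ) (hp : 0 ≤ p) (hp1 : p ≤ 1)
    (H : Matrix (Fin m) (Fin n) (ZMod 2))
    (hrow : ∀ i, (univ.filter (fun j => H i j ≠ 0)).card ≤ Δ)
    (hcol : ∀ j, (univ.filter (fun i => H i j ≠ 0)).card ≤ Δ)
    (ν : Fin D → ((Fin n → ZMod 2) × (Fin m → ZMod 2)) → ℝ)
    (hν : ∀ t e, 0 ≤ ν t e) (hνsum : ∀ t, ∑ e, ν t e = 1)
    (hld : ∀ t, ∀ S : Finset (Fin n ⊕ Fin m),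
      ∑ e ∈ univ.filter
          (fun e : (Fin n → ZMod 2) × (Fin m → ZMod 2) => S ⊆ fsupp (Sum.elim e.1 e.2)),
        ν t e ≤ Real.sqrt p ^ S.card) :
    ∀ S : Finset (Fin n ⊕ Fin m),
      ∑ E ∈ univ.filter
          (fun E : Fin D → (Fin n → ZMod 2) × (Fin m → ZMod 2) =>
            S ⊆ univ.biUnion (fun t =>
              fsupp (Sum.elim (E t).1 (fun i => (E t).2 i + H.mulVec (E t).1 i)))),
        ∏ t, ν t (E t)
      ≤ ((2 : ℝ) ^ (Δ + 1) * (D : ℝ) * p ^ (1 / (2 * (Δ + 1) : ℝ))) ^ S.card := by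
  classical
  intro S
  set q := Real.sqrt p with hqdef
  set r : ℝ := p ^ (1 / (2 * (Δ + 1) : ℝ)) with hrdef
  have hq0 : 0 ≤ q := Real.sqrt_nonneg p
  have hr0 : 0 ≤ r := Real.rpow_nonneg hp _
  have hΔne : ((Δ : ℝ) + 1) ≠ 0 := by positivity
  have hr1 : r ≤ 1 := Real.rpow_le_one hp hp1 (by positivity)
  have hqr : q = r ^ (Δ + 1) := by
    rw [hrdef, ← Real.rpow_natCast (p ^ (1 / (2 * (Δ + 1) : ℝ) : ℝ)) (Δ + 1),
      ← Real.rpow_mul hp, hqdef, Real.sqrt_eq_rpow]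
    congr 1
    push_cast
    field_simp
  -- the "row" sets of the propagation matrix
  set R : (Fin n ⊕ Fin m) → Finset (Fin n ⊕ Fin m) := fun s =>
    Sum.elim (fun j => {Sum.inl j})
      (fun i => insert (Sum.inr i) ((univ.filter (fun j => H i j ≠ 0)).image Sum.inl)) s
    with hRdef
  have hRcard : ∀ s, (R s).card ≤ Δ + 1 := by
    rintro (j | i)
    · simp [hRdef]
    · refine le_trans (Finset.card_insert_le _ _) ?_
      have h1 := Finset.card_image_le
        (s := univ.filter (fun j => H i j ≠ 0)) (f := Sum.inl (β := Fin m))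
      have h2 := hrow i
      omega
  have hRfiber : ∀ w : Fin n ⊕ Fin m,
      (univ.filter (fun s => w ∈ R s)).card ≤ Δ + 1 := by
    rintro (j | i)
    · have hsub : univ.filter (fun s => Sum.inl j ∈ R s) ⊆
          insert (Sum.inl j) ((univ.filter (fun i => H i j ≠ 0)).image Sum.inr) := by
        rintro (j' | i) hs
        · simp only [mem_filter, hRdef, Sum.elim_inl, Finset.mem_singleton] at hs
          simp [hs.2]
        · simp only [mem_filter, hRdef, Sum.elim_inr, Finset.mem_insert,
            Finset.mem_image, mem_univ, true_and] at hs
          rcases hs with h | ⟨j'', hj'', h⟩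
          · exact absurd h (by simp)
          · obtain rfl : j'' = j := by simpa using h
            simp [hj'']
      refine le_trans (Finset.card_le_card hsub) ?_
      refine le_trans (Finset.card_insert_le _ _) ?_
      have h1 := Finset.card_image_le
        (s := univ.filter (fun i => H i j ≠ 0)) (f := Sum.inr (α := Fin n))
      have := hcol j
      omega
    · have hsub : univ.filter (fun s => Sum.inr i ∈ R s) ⊆ {Sum.inr i} := by
        rintro (j' | i') hs
        · simp only [mem_filter, hRdef, Sum.elim_inl, Finset.mem_singleton] at hs
          exact absurd hs.2 (by simp)
        · simp only [mem_filter, hRdef, Sum.elim_inr, Finset.mem_insert,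
            Finset.mem_image, mem_univ, true_and] at hs
          rcases hs with h | ⟨j'', _, h⟩
          · obtain rfl : i' = i := by simpa using h.symm
            simp
          · exact absurd h (by simp)
      refine le_trans (Finset.card_le_card hsub) ?_
      simp only [Finset.card_singleton]
      omega
  -- fact A: output support covered by rows over input support
  have hcover : ∀ e : (Fin n → ZMod 2) × (Fin m → ZMod 2), ∀ s : Fin n ⊕ Fin m,
      s ∈ fsupp (Sum.elim e.1 (fun i => e.2 i + H.mulVec e.1 i)) →
      ∃ w ∈ R s, w ∈ fsupp (Sum.elim e.1 e.2) := by
    rintro e (j | i) hs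
    · refine ⟨Sum.inl j, by simp [hRdef], ?_⟩
      simp only [fsupp, mem_filter, mem_univ, true_and, Sum.elim_inl] at hs ⊢
      exact hs
    · simp only [fsupp, mem_filter, mem_univ, true_and, Sum.elim_inr] at hs
      by_cases h2 : e.2 i ≠ 0
      · exact ⟨Sum.inr i, by simp [hRdef], by simp [fsupp, h2]⟩
      · push_neg at h2
        have hmv : H.mulVec e.1 i ≠ 0 := by
          intro h; exact hs (by rw [h2, h, add_zero])
        have hex : ∃ j, H i j * e.1 j ≠ 0 := by
          by_contra hc; push_neg at hc
          exact hmv (by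
            simpa [Matrix.mulVec, dotProduct] using
              Finset.sum_eq_zero (fun j _ => hc j))
        obtain ⟨j, hj⟩ := hex
        have h1 : H i j ≠ 0 := fun h => hj (by simp [h])
        have h2' : e.1 j ≠ 0 := fun h => hj (by simp [h])
        exact ⟨Sum.inl j, by simp [hRdef, h1], by simp [fsupp, h2']⟩
  by_cases hS : S = ∅
  · rw [hS]
    simp only [Finset.empty_subset, Finset.filter_true, Finset.card_empty, pow_zero]
    have hall : ∑ E : Fin D → (Fin n → ZMod 2) × (Fin m → ZMod 2), ∏ t, ν t (E t)
        = ∏ t, ∑ e, ν t e := by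
      rw [Finset.prod_univ_sum (fun _ => univ) (fun t e => ν t e), Fintype.piFinset_univ]
    rw [hall]
    exact le_of_eq (by simp [hνsum])
  · obtain ⟨s₀, hs₀⟩ := Finset.nonempty_iff_ne_empty.2 hS
    set d : Fin D × (Fin n ⊕ Fin m) := (⟨0, hD⟩, s₀) with hddef
    set Φ : Finset ((Fin n ⊕ Fin m) → Fin D × (Fin n ⊕ Fin m)) :=
      Fintype.piFinset (fun s => if s ∈ S then (univ : Finset (Fin D)) ×ˢ R s
        else ({d} : Finset (Fin D × (Fin n ⊕ Fin m)))) with hΦdef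
    -- covering by selector events
    have hsub : (univ.filter (fun E : Fin D → (Fin n → ZMod 2) × (Fin m → ZMod 2) =>
          S ⊆ univ.biUnion (fun t =>
            fsupp (Sum.elim (E t).1 (fun i => (E t).2 i + H.mulVec (E t).1 i))))) ⊆
        Φ.biUnion (fun σ => univ.filter
          (fun E : Fin D → (Fin n → ZMod 2) × (Fin m → ZMod 2) =>
            ∀ s ∈ S, (σ s).2 ∈ fsupp (Sum.elim (E ((σ s).1)).1 (E ((σ s).1)).2))) := by
      intro E hE
      simp only [mem_filter, mem_univ, true_and] at hE
      have hex : ∀ s ∈ S, ∃ tw : Fin D × (Fin n ⊕ Fin m),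
          tw.2 ∈ R s ∧ tw.2 ∈ fsupp (Sum.elim (E tw.1).1 (E tw.1).2) := by
        intro s hs
        obtain ⟨t, -, ht⟩ := Finset.mem_biUnion.1 (hE hs)
        obtain ⟨w, hw1, hw2⟩ := hcover (E t) s ht
        exact ⟨(t, w), hw1, hw2⟩
      choose f hf1 hf2 using hex
      refine Finset.mem_biUnion.2 ⟨fun s => if h : s ∈ S then f s h else d, ?_, ?_⟩
      · rw [hΦdef, Fintype.mem_piFinset]
        intro s
        by_cases h : s ∈ S
        · simp only [h, if_true, dif_pos h]
          exact Finset.mem_product.2 ⟨mem_univ _, hf1 s h⟩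
        · simp [h]
      · simp only [mem_filter, mem_univ, true_and]
        intro s hs
        simp only [dif_pos hs]
        exact hf2 s hs
    -- per-selector bound
    have hterm : ∀ σ ∈ Φ,
        ∑ E ∈ univ.filter (fun E : Fin D → (Fin n → ZMod 2) × (Fin m → ZMod 2) =>
            ∀ s ∈ S, (σ s).2 ∈ fsupp (Sum.elim (E ((σ s).1)).1 (E ((σ s).1)).2)),
          ∏ t, ν t (E t) ≤ r ^ S.card := by
      intro σ hσ
      have hσR : ∀ s ∈ S, (σ s).2 ∈ R s := by
        intro s hs
        have h := (Fintype.mem_piFinset.1 hσ) s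
        rw [if_pos hs] at h
        exact (Finset.mem_product.1 h).2
      set T : Fin D → Finset (Fin n ⊕ Fin m) :=
        fun t => (S.filter (fun s => (σ s).1 = t)).image (fun s => (σ s).2) with hTdef
      have hset : univ.filter (fun E : Fin D → (Fin n → ZMod 2) × (Fin m → ZMod 2) =>
            ∀ s ∈ S, (σ s).2 ∈ fsupp (Sum.elim (E ((σ s).1)).1 (E ((σ s).1)).2))
          = Fintype.piFinset (fun t => univ.filter
              (fun e : (Fin n → ZMod 2) × (Fin m → ZMod 2) =>
                T t ⊆ fsupp (Sum.elim e.1 e.2))) := by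
        ext E
        simp only [mem_filter, mem_univ, true_and, Fintype.mem_piFinset]
        constructor
        · intro h t
          intro w hw
          simp only [hTdef, Finset.mem_image, Finset.mem_filter] at hw
          obtain ⟨s, ⟨hsS, hst⟩, rfl⟩ := hw
          have := h s hsS
          rwa [hst] at this
        · intro h s hs
          refine h ((σ s).1) ?_
          simp only [hTdef, Finset.mem_image, Finset.mem_filter]
          exact ⟨s, ⟨hs, rfl⟩, rfl⟩
      rw [hset, ← Finset.prod_univ_sum]
      have hcount : S.card ≤ (Δ + 1) * ∑ t, (T t).card := by
        have h1 : S.card = ∑ t, (S.filter (fun s => (σ s).1 = t)).card :=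
          Finset.card_eq_sum_card_fiberwise (fun s _ => mem_univ _)
        rw [h1, Finset.mul_sum]
        refine Finset.sum_le_sum fun t _ => ?_
        refine Finset.card_le_mul_card_image _ (Δ + 1) ?_
        intro w hw
        refine le_trans (Finset.card_le_card ?_) (hRfiber w)
        intro s hs
        simp only [Finset.mem_filter] at hs ⊢
        obtain ⟨⟨hsS, -⟩, hsw⟩ := hs
        exact ⟨mem_univ s, by rw [← hsw]; exact hσR s hsS⟩
      calc ∏ t, ∑ e ∈ univ.filter
              (fun e : (Fin n → ZMod 2) × (Fin m → ZMod 2) =>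
                T t ⊆ fsupp (Sum.elim e.1 e.2)), ν t e
          ≤ ∏ t, q ^ (T t).card :=
            Finset.prod_le_prod (fun t _ => Finset.sum_nonneg fun e _ => hν t e)
              (fun t _ => hld t (T t))
        _ = q ^ (∑ t, (T t).card) := Finset.prod_pow_eq_pow_sum _ _ _
        _ = r ^ ((Δ + 1) * ∑ t, (T t).card) := by rw [hqr, ← pow_mul]
        _ ≤ r ^ S.card := pow_le_pow_of_le_one hr0 hr1 hcount
    -- counting selectors
    have hΦcard : (Φ.card : ℝ) ≤ ((D * (Δ + 1) : ℕ) : ℝ) ^ S.card := by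
      have hnat : Φ.card ≤ (D * (Δ + 1)) ^ S.card := by
        rw [hΦdef, Fintype.card_piFinset]
        have hsplit : ∏ s : Fin n ⊕ Fin m,
            (if s ∈ S then (univ : Finset (Fin D)) ×ˢ R s
              else ({d} : Finset (Fin D × (Fin n ⊕ Fin m)))).card
            = (∏ s ∈ univ \ S,
                (if s ∈ S then (univ : Finset (Fin D)) ×ˢ R s
                  else ({d} : Finset (Fin D × (Fin n ⊕ Fin m)))).card) *
              ∏ s ∈ S,
                (if s ∈ S then (univ : Finset (Fin D)) ×ˢ R s
                  else ({d} : Finset (Fin D × (Fin n ⊕ Fin m)))).card :=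
          (Finset.prod_sdiff (Finset.subset_univ S)).symm
        rw [hsplit]
        have h2 : ∏ s ∈ univ \ S,
            (if s ∈ S then (univ : Finset (Fin D)) ×ˢ R s
              else ({d} : Finset (Fin D × (Fin n ⊕ Fin m)))).card = 1 := by
          refine Finset.prod_eq_one fun s hs => ?_
          rw [if_neg (Finset.mem_sdiff.1 hs).2]
          simp
        rw [h2, one_mul]
        refine Finset.prod_le_pow_card _ _ _ fun s hs => ?_
        rw [if_pos hs, Finset.card_product, Finset.card_univ, Fintype.card_fin]
        exact Nat.mul_le_mul_left D (hRcard s)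
      exact_mod_cast le_trans (Nat.cast_le.2 hnat) (le_of_eq (by push_cast; ring))
    -- put everything together
    calc ∑ E ∈ univ.filter
            (fun E : Fin D → (Fin n → ZMod 2) × (Fin m → ZMod 2) =>
              S ⊆ univ.biUnion (fun t =>
                fsupp (Sum.elim (E t).1 (fun i => (E t).2 i + H.mulVec (E t).1 i)))),
          ∏ t, ν t (E t)
        ≤ ∑ E ∈ Φ.biUnion (fun σ => univ.filter
            (fun E : Fin D → (Fin n → ZMod 2) × (Fin m → ZMod 2) =>
              ∀ s ∈ S, (σ s).2 ∈ fsupp (Sum.elim (E ((σ s).1)).1 (E ((σ s).1)).2))),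
          ∏ t, ν t (E t) :=
          Finset.sum_le_sum_of_subset_of_nonneg hsub
            (fun E _ _ => Finset.prod_nonneg fun t _ => hν t (E t))
      _ ≤ ∑ σ ∈ Φ, ∑ E ∈ univ.filter
            (fun E : Fin D → (Fin n → ZMod 2) × (Fin m → ZMod 2) =>
              ∀ s ∈ S, (σ s).2 ∈ fsupp (Sum.elim (E ((σ s).1)).1 (E ((σ s).1)).2)),
          ∏ t, ν t (E t) :=
          sum_biUnion_le_sum _ _ _ (fun E => Finset.prod_nonneg fun t _ => hν t (E t))
      _ ≤ ∑ _σ ∈ Φ, r ^ S.card := Finset.sum_le_sum hterm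
      _ = (Φ.card : ℝ) * r ^ S.card := by rw [Finset.sum_const, nsmul_eq_mul]
      _ ≤ ((D * (Δ + 1) : ℕ) : ℝ) ^ S.card * r ^ S.card :=
          mul_le_mul_of_nonneg_right hΦcard (pow_nonneg hr0 _)
      _ = (((D * (Δ + 1) : ℕ) : ℝ) * r) ^ S.card := (mul_pow _ _ _).symm
      _ ≤ ((2 : ℝ) ^ (Δ + 1) * (D : ℝ) * r) ^ S.card := by
          refine pow_le_pow_left₀ (by positivity) ?_ _
          have h2 : ((Δ : ℝ) + 1) ≤ (2 : ℝ) ^ (Δ + 1) := by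
            exact_mod_cast (Nat.lt_two_pow_self (n := Δ + 1)).le
          have hD0 : (0 : ℝ) ≤ (D : ℝ) := Nat.cast_nonneg D
          have : ((D * (Δ + 1) : ℕ) : ℝ) ≤ (2 : ℝ) ^ (Δ + 1) * (D : ℝ) := by
            push_cast
            nlinarith
          exact mul_le_mul_of_nonneg_right this hr0
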